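/- Let M ≥ 2 and let A be the inverse of the M×M Vandermonde matrix V with V_{j,n} = j^(n-1). Then row M-1 of A satisfies A_{M-1,n} = (-1)^(M+n-1)/((n-1)!(M-n)!) * (M(M+1)/2 - n) for n = 1,…,M. -/

import Mathlib

open Polynomial Finset

lemma aux_nat_prod (k : ℕ) : ∏ j ∈ Finset.range k, (k - j) = k.factorial := by
  rw [← Finset.prod_range_add_one_eq_factorial, ← Finset.prod_range_reflect]
  exact Finset.prod_congr rfl fun j hj => by rw [Finset.mem_range] at hj; omega

lemma aux_prod_cast (k : ℕ) : ∏ j ∈ Finset.range k, ((k : ℚ) - j) = k.factorial := by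
  rw [← aux_nat_prod k, Nat.cast_prod]
  exact Finset.prod_congr rfl fun j hj => by
    rw [Finset.mem_range] at hj
    rw [Nat.cast_sub hj.le]

lemma aux_key_prod (M k : ℕ) (hk : k < M) :
    ∏ j ∈ (Finset.range M).erase k, ((k : ℚ) - j) =
      (-1 : ℚ) ^ (M - 1 - k) * k.factorial * (M - 1 - k).factorial := by
  induction M, hk using Nat.le_induction with
  | base =>
      rw [Finset.range_add_one, Finset.erase_insert (by simp)]
      simp [aux_prod_cast k]
  | succ M hM ih =>
      obtain ⟨m, rfl⟩ : ∃ m, M = k + m + 1 := ⟨M - k - 1, by omega⟩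
      rw [Finset.range_add_one, Finset.erase_insert_of_ne (by omega),
        Finset.prod_insert (by simp), ih]
      have h1 : k + m + 1 - 1 - k = m := by omega
      have h2 : k + m + 1 + 1 - 1 - k = m + 1 := by omega
      rw [h1, h2, Nat.factorial_succ]
      push_cast
      ring

lemma aux_gauss (M : ℕ) : ∑ j ∈ Finset.range M, ((j : ℚ) + 1) = M * (M + 1) / 2 := by
  induction M with
  | zero => simp
  | succ n ih => rw [Finset.sum_range_succ, ih]; push_cast; ring

theorem inverse_vandermonde_row_M_sub_one (M : ℕ) (hM : 2 ≤ M) (k : Fin M) :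
    (Matrix.of fun j n : Fin M => ((j : ℚ) + 1) ^ (n : ℕ))⁻¹
        ⟨M - 2, by omega⟩ k =
      (-1 : ℚ) ^ (M + (k : ℕ)) /
          ((k : ℕ).factorial * (M - ((k : ℕ) + 1)).factorial) *
        ((M : ℚ) * ((M : ℚ) + 1) / 2 - ((k : ℕ) + 1)) := by
  have hM0 : 0 < M := by omega
  set v : Fin M → ℚ := fun i => (i : ℚ) + 1 with hv
  have hvinj : Set.InjOn v (Finset.univ : Finset (Fin M)) := by
    intro a _ b _ hab
    have : ((a : ℕ) : ℚ) = ((b : ℕ) : ℚ) := by simpa [hv] using hab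
    exact Fin.ext (by exact_mod_cast this)
  set B : Matrix (Fin M) (Fin M) ℚ :=
    Matrix.of fun n l : Fin M => (Lagrange.basis Finset.univ v l).coeff n with hB
  have hdeg : ∀ l : Fin M, (Lagrange.basis Finset.univ v l).natDegree = M - 1 := by
    intro l
    rw [Lagrange.natDegree_basis hvinj (Finset.mem_univ l), Finset.card_univ, Fintype.card_fin]
  have hVB : (Matrix.of fun j n : Fin M => ((j : ℚ) + 1) ^ (n : ℕ)) * B = 1 := by
    ext j l
    rw [Matrix.mul_apply]
    have : ∑ n : Fin M, (Matrix.of fun j n : Fin M => ((j : ℚ) + 1) ^ (n : ℕ)) j n * B n l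
        = (Lagrange.basis Finset.univ v l).eval (v j) := by
      rw [Polynomial.eval_eq_sum_range' (n := M) (by rw [hdeg l]; omega),
        ← Fin.sum_univ_eq_sum_range
          (fun i => (Lagrange.basis Finset.univ v l).coeff i * v j ^ i)]
      exact Finset.sum_congr rfl fun n _ => by
        simp only [Matrix.of_apply, hB, hv]; ring
    rw [this]
    by_cases hjl : j = l
    · subst hjl
      rw [Lagrange.eval_basis_self hvinj (Finset.mem_univ j), Matrix.one_apply_eq]
    · rw [Lagrange.eval_basis_of_ne (Ne.symm hjl) (Finset.mem_univ j),
        Matrix.one_apply_ne hjl]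
  rw [Matrix.inv_eq_right_inv hVB]
  show (Lagrange.basis Finset.univ v k).coeff (M - 2) = _
  -- split the basis polynomial
  have hbasis : Lagrange.basis Finset.univ v k =
      Polynomial.C (∏ j ∈ Finset.univ.erase k, (v k - v j)⁻¹) *
        ∏ j ∈ Finset.univ.erase k, (Polynomial.X - Polynomial.C (v j)) := by
    simp only [Lagrange.basis, Lagrange.basisDivisor, Finset.prod_mul_distrib, map_prod]
  have hcard : (Finset.univ.erase k).card = M - 1 := by
    rw [Finset.card_erase_of_mem (Finset.mem_univ k), Finset.card_univ, Fintype.card_fin]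
  have hcoeff : (∏ j ∈ Finset.univ.erase k, (Polynomial.X - Polynomial.C (v j))).coeff (M - 2)
      = - ∑ j ∈ Finset.univ.erase k, v j := by
    have := Polynomial.prod_X_sub_C_coeff_card_pred (Finset.univ.erase k) v
      (by rw [hcard]; omega)
    rw [hcard] at this
    have h2 : M - 1 - 1 = M - 2 := by omega
    rw [h2] at this
    exact this
  rw [hbasis, Polynomial.coeff_C_mul, hcoeff]
  -- compute the sum
  have hsum : ∑ j ∈ Finset.univ.erase k, v j = (M : ℚ) * ((M : ℚ) + 1) / 2 - ((k : ℕ) + 1) := by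
    rw [Finset.sum_erase_eq_sub (Finset.mem_univ k)]
    congr 1
    rw [Fin.sum_univ_eq_sum_range (fun j => (j : ℚ) + 1)]
    exact aux_gauss M
  -- compute the product
  have himg : (Finset.univ.erase k).image (Fin.val : Fin M → ℕ) = (Finset.range M).erase (k : ℕ) := by
    ext a
    simp only [Finset.mem_image, Finset.mem_erase, Finset.mem_univ, true_and, and_true,
      Finset.mem_range]
    constructor
    · rintro ⟨j, hj, rfl⟩
      exact ⟨fun h => hj (Fin.ext h), j.isLt⟩
    · rintro ⟨ha, haM⟩
      exact ⟨⟨a, haM⟩, fun h => ha (congrArg Fin.val h), rfl⟩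
  have hprod : ∏ j ∈ Finset.univ.erase k, (v k - v j) =
      (-1 : ℚ) ^ (M - 1 - (k : ℕ)) * (k : ℕ).factorial * (M - 1 - (k : ℕ)).factorial := by
    rw [← aux_key_prod M k k.isLt, ← himg,
      Finset.prod_image (fun a _ b _ h => Fin.val_injective h)]
    exact Finset.prod_congr rfl fun j _ => by simp [hv]
  rw [Finset.prod_inv_distrib, hprod, hsum]
  obtain ⟨m, hm⟩ : ∃ m, M = (k : ℕ) + m + 1 := ⟨M - k - 1, by omega⟩
  have h1 : M - 1 - (k : ℕ) = m := by omega
  have h2 : M - ((k : ℕ) + 1) = m := by omega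
  have h3 : M + (k : ℕ) = 2 * (k : ℕ) + (m + 1) := by omega
  rw [h1, h2, h3, pow_add, pow_mul, neg_one_sq, one_pow, one_mul]
  have hk0 : ((k : ℕ).factorial : ℚ) ≠ 0 := Nat.cast_ne_zero.mpr (Nat.factorial_ne_zero _)
  have hm0 : ((m : ℕ).factorial : ℚ) ≠ 0 := Nat.cast_ne_zero.mpr (Nat.factorial_ne_zero _)
  rw [mul_inv, mul_inv]
  rcases Nat.even_or_odd m with he | ho
  · rw [he.neg_one_pow]
    field_simp
    rw [pow_succ, he.neg_one_pow]
    ring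
  · rw [ho.neg_one_pow]
    field_simp
    rw [pow_succ, ho.neg_one_pow]
    ring
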